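/- Let 0 < ρ < 1. Then for all z, w in the open unit disk 𝔻 = {z ∈ ℂ : |z| < 1}, the double series Σ_{k=0}^{∞} Σ_{l=0}^{∞} ρ^{|l−k|} z^k conj(w)^l converges absolutely and equals (1 − ρ² z·conj(w)) / [ (1 − z·conj(w)) (1 − ρ z) (1 − ρ·conj(w)) ]. -/

import Mathlib

open Complex

lemma geo_prod_summable_norm (a b : ℂ) (ha : ‖a‖ < 1) (hb : ‖b‖ < 1) :
    Summable fun p : ℕ × ℕ => ‖a ^ p.1 * b ^ p.2‖ := by
  have := (summable_geometric_of_lt_one (norm_nonneg a) ha).mul_of_nonneg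
    (summable_geometric_of_lt_one (norm_nonneg b) hb)
    (fun n => pow_nonneg (norm_nonneg a) n) (fun n => pow_nonneg (norm_nonneg b) n)
  simpa [norm_mul, norm_pow] using this

lemma geo_prod_tsum (a b : ℂ) (ha : ‖a‖ < 1) (hb : ‖b‖ < 1) :
    ∑' p : ℕ × ℕ, a ^ p.1 * b ^ p.2 = (1 - a)⁻¹ * (1 - b)⁻¹ := by
  have h1 : Summable fun n : ℕ => ‖a ^ n‖ := by
    simpa [norm_pow] using summable_geometric_of_lt_one (norm_nonneg a) ha
  have h2 : Summable fun n : ℕ => ‖b ^ n‖ := by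
    simpa [norm_pow] using summable_geometric_of_lt_one (norm_nonneg b) hb
  rw [← tsum_mul_tsum_of_summable_norm h1 h2,
    tsum_geometric_of_norm_lt_one ha, tsum_geometric_of_norm_lt_one hb]

lemma one_sub_ne_zero_of_norm_lt_one {x : ℂ} (hx : ‖x‖ < 1) : (1 : ℂ) - x ≠ 0 := by
  intro h
  have : x = 1 := by linear_combination -h
  rw [this] at hx
  simp at hx

/-- The "upper triangle" set. -/
def uT : Set (ℕ × ℕ) := {p | p.1 ≤ p.2}

/-- Equiv from `ℕ×ℕ` onto the upper triangle: `(k,m) ↦ (k, k+m)`. -/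
def eUpper : ℕ × ℕ ≃ uT where
  toFun p := ⟨(p.1, p.1 + p.2), Nat.le_add_right _ _⟩
  invFun q := (q.1.1, q.1.2 - q.1.1)
  left_inv p := by simp
  right_inv q := by
    rcases q with ⟨⟨k, l⟩, h⟩
    simp only [uT, Set.mem_setOf_eq] at h
    apply Subtype.ext
    have hkl : k + (l - k) = l := by omega
    simp [hkl]

/-- Equiv from `ℕ×ℕ` onto the complement of the upper triangle: `(l,n) ↦ (l+1+n, l)`. -/
def eLower : ℕ × ℕ ≃ ↥(uTᶜ) where
  toFun p := ⟨(p.1 + 1 + p.2, p.1), by simp [uT]; omega⟩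
  invFun q := (q.1.2, q.1.1 - q.1.2 - 1)
  left_inv p := by
    obtain ⟨a, b⟩ := p
    have hab : a + 1 + b - a - 1 = b := by omega
    simp [hab]
  right_inv q := by
    rcases q with ⟨⟨k, l⟩, h⟩
    simp only [uT, Set.mem_compl_iff, Set.mem_setOf_eq, not_le] at h
    apply Subtype.ext
    have hkl : l + 1 + (k - l - 1) = k := by omega
    simp [hkl]

/-- the covariance kernel of the GAF with Ornstein–Uhlenbeck coefficients
`γ(k) = ρ^{|k|}`: the double series converges absolutely and
`Σ_{k,l≥0} ρ^{|l-k|} z^k conj(w)^l = (1 - ρ² z conj(w)) / ((1 - z conj(w))(1 - ρz)(1 - ρ conj(w)))`. -/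
theorem stmt_10 (ρ : ℝ) (hρ0 : 0 < ρ) (hρ1 : ρ < 1)
    (z w : ℂ) (hz : ‖z‖ < 1) (hw : ‖w‖ < 1) :
    Summable (fun p : ℕ × ℕ =>
      ‖((ρ ^ ((p.2 : ℤ) - (p.1 : ℤ)).natAbs : ℝ) : ℂ) * z ^ p.1 * ((starRingEnd ℂ) w) ^ p.2‖) ∧
    ∑' p : ℕ × ℕ, ((ρ ^ ((p.2 : ℤ) - (p.1 : ℤ)).natAbs : ℝ) : ℂ) * z ^ p.1 * ((starRingEnd ℂ) w) ^ p.2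
      = (1 - (ρ : ℂ) ^ 2 * (z * (starRingEnd ℂ) w)) /
        ((1 - z * (starRingEnd ℂ) w) * (1 - (ρ : ℂ) * z) * (1 - (ρ : ℂ) * (starRingEnd ℂ) w)) := by
  set v : ℂ := (starRingEnd ℂ) w with hv_def
  have hv : ‖v‖ < 1 := by simpa [hv_def] using hw
  set F : ℕ × ℕ → ℂ :=
    fun p => ((ρ ^ ((p.2 : ℤ) - (p.1 : ℤ)).natAbs : ℝ) : ℂ) * z ^ p.1 * v ^ p.2 with hF_def
  -- summability of norms
  have hnorm : Summable fun p : ℕ × ℕ => ‖F p‖ := by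
    refine Summable.of_nonneg_of_le (fun p => norm_nonneg (F p))
      (fun p => ?_) (geo_prod_summable_norm z v hz hv)
    rw [hF_def]
    simp only [norm_mul, norm_pow, Complex.norm_real, Real.norm_eq_abs, abs_of_pos hρ0]
    have h2 : ρ ^ ((p.2 : ℤ) - (p.1 : ℤ)).natAbs ≤ 1 := pow_le_one₀ hρ0.le hρ1.le
    have := mul_le_mul_of_nonneg_right
      (mul_le_mul_of_nonneg_right h2 (pow_nonneg (norm_nonneg z) p.1))
      (pow_nonneg (norm_nonneg v) p.2)
    simpa using this
  refine ⟨hnorm, ?_⟩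
  have hFsum : Summable F := hnorm.of_norm
  -- norms of the products
  have hzv : ‖z * v‖ < 1 := by
    rw [norm_mul]; nlinarith [norm_nonneg z, norm_nonneg v]
  have hρz : ‖(ρ : ℂ) * z‖ < 1 := by
    rw [norm_mul, Complex.norm_real, Real.norm_eq_abs, abs_of_pos hρ0]
    nlinarith [norm_nonneg z]
  have hρv : ‖(ρ : ℂ) * v‖ < 1 := by
    rw [norm_mul, Complex.norm_real, Real.norm_eq_abs, abs_of_pos hρ0]
    nlinarith [norm_nonneg v]
  -- term identities on the two triangles
  have hup : ∀ p : ℕ × ℕ, F (eUpper p).val = (z * v) ^ p.1 * ((ρ : ℂ) * v) ^ p.2 := by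
    intro ⟨k, m⟩
    have hna : (((k + m : ℕ) : ℤ) - (k : ℤ)).natAbs = m := by omega
    simp only [hF_def, eUpper, Equiv.coe_fn_mk, hna]
    push_cast
    ring
  have hlo : ∀ p : ℕ × ℕ,
      F (eLower p).val = (ρ : ℂ) * z * ((z * v) ^ p.1 * ((ρ : ℂ) * z) ^ p.2) := by
    intro ⟨l, n⟩
    have hna : (((l : ℕ) : ℤ) - ((l + 1 + n : ℕ) : ℤ)).natAbs = n + 1 := by omega
    simp only [hF_def, eLower, Equiv.coe_fn_mk, hna]
    push_cast
    ring
  -- split the sum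
  have hsplit : (∑' x : uT, F x) + ∑' x : ↥(uTᶜ), F x = ∑' p, F p :=
    Summable.tsum_add_tsum_compl (hFsum.subtype _) (hFsum.subtype _)
  have hupper : (∑' x : uT, F x) = (1 - z * v)⁻¹ * (1 - (ρ : ℂ) * v)⁻¹ := by
    rw [← eUpper.tsum_eq (fun x : uT => F x)]
    calc (∑' p : ℕ × ℕ, F (eUpper p).val)
        = ∑' p : ℕ × ℕ, (z * v) ^ p.1 * ((ρ : ℂ) * v) ^ p.2 := tsum_congr hup
      _ = (1 - z * v)⁻¹ * (1 - (ρ : ℂ) * v)⁻¹ := geo_prod_tsum _ _ hzv hρv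
  have hlower : (∑' x : ↥(uTᶜ), F x)
      = (ρ : ℂ) * z * ((1 - z * v)⁻¹ * (1 - (ρ : ℂ) * z)⁻¹) := by
    rw [← eLower.tsum_eq (fun x : ↥(uTᶜ) => F x)]
    calc (∑' p : ℕ × ℕ, F (eLower p).val)
        = ∑' p : ℕ × ℕ, (ρ : ℂ) * z * ((z * v) ^ p.1 * ((ρ : ℂ) * z) ^ p.2) := tsum_congr hlo
      _ = (ρ : ℂ) * z * ∑' p : ℕ × ℕ, (z * v) ^ p.1 * ((ρ : ℂ) * z) ^ p.2 := tsum_mul_left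
      _ = (ρ : ℂ) * z * ((1 - z * v)⁻¹ * (1 - (ρ : ℂ) * z)⁻¹) := by
          rw [geo_prod_tsum _ _ hzv hρz]
  rw [← hsplit, hupper, hlower]
  have d1 := one_sub_ne_zero_of_norm_lt_one hzv
  have d2 := one_sub_ne_zero_of_norm_lt_one hρz
  have d3 := one_sub_ne_zero_of_norm_lt_one hρv
  rw [eq_div_iff (mul_ne_zero (mul_ne_zero d1 d2) d3)]
  have e1 := mul_inv_cancel₀ d1
  have e2 := mul_inv_cancel₀ d2
  have e3 := mul_inv_cancel₀ d3
  linear_combination ((1 - (ρ : ℂ) * z) * ((1 - (ρ : ℂ) * v) * (1 - (ρ : ℂ) * v)⁻¹)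
      + (ρ : ℂ) * z * (1 - (ρ : ℂ) * v) * ((1 - (ρ : ℂ) * z) * (1 - (ρ : ℂ) * z)⁻¹)) * e1
    + (1 - (ρ : ℂ) * z) * e3 + (ρ : ℂ) * z * (1 - (ρ : ℂ) * v) * e2
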